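/- For β₂ ∈ (0,1) and positive reals a₁,...,a_T with bₜ = Σ_{j=1}^t β₂^{t-j} aⱼ and ε > 0, the sum Σ_{t=1}^T aₜ/(bₜ + ε) ≤ ln(1 + b_T/ε) - T·ln(β₂). -/

import Mathlib

open Real Finset

lemma adam_key_ineq (x y : ℝ) (hx : 0 < x) (hxy : x < y) :
    x / y ≤ Real.log y - Real.log (y - x) := by
  have hy : 0 < y := hx.trans hxy
  have hyx : 0 < y - x := by linarith
  have h := Real.log_le_sub_one_of_pos (div_pos hyx hy)
  rw [Real.log_div hyx.ne' hy.ne'] at h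
  have : (y - x) / y - 1 = -(x / y) := by field_simp; ring
  rw [this] at h
  linarith

lemma adam_B_succ (β₂ : ℝ) (a : ℕ → ℝ) (t : ℕ) :
    (∑ j ∈ Finset.Icc 1 (t + 1), β₂ ^ (t + 1 - j) * a j)
      = β₂ * (∑ j ∈ Finset.Icc 1 t, β₂ ^ (t - j) * a j) + a (t + 1) := by
  rw [show Finset.Icc 1 (t + 1) = insert (t + 1) (Finset.Icc 1 t) by
    ext x; simp only [Finset.mem_insert, Finset.mem_Icc]; omega,
    Finset.sum_insert (by simp), Finset.mul_sum]
  have h1 : β₂ ^ (t + 1 - (t + 1)) * a (t + 1) = a (t + 1) := by simp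
  rw [h1]
  rw [add_comm]
  congr 1
  apply Finset.sum_congr rfl
  intro j hj
  have hj' : j ≤ t := (Finset.mem_Icc.mp hj).2
  rw [show t + 1 - j = (t - j) + 1 by omega, pow_succ]
  ring

/-- Standard Adam-analysis lemma (Défossez et al.). For `β₂ ∈ (0,1)`,
`ε > 0` and positive `a₁, …, a_T`, with `bₜ = ∑_{j=1}^t β₂^{t-j} aⱼ`, we have
`∑_{t=1}^T aₜ/(bₜ + ε) ≤ ln(1 + b_T/ε) - T ln β₂`. -/
theorem adam_log_sum_bound (β₂ ε : ℝ) (hβ₂ : β₂ ∈ Set.Ioo (0 : ℝ) 1) (hε : 0 < ε)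
    (T : ℕ) (a : ℕ → ℝ) (ha : ∀ t, 1 ≤ t → t ≤ T → 0 < a t) :
    ∑ t ∈ Finset.Icc 1 T,
        a t / ((∑ j ∈ Finset.Icc 1 t, β₂ ^ (t - j) * a j) + ε) ≤
      Real.log (1 + (∑ j ∈ Finset.Icc 1 T, β₂ ^ (T - j) * a j) / ε) -
        T * Real.log β₂ := by
  obtain ⟨hβ0, hβ1⟩ := hβ₂
  set B : ℕ → ℝ := fun t => ∑ j ∈ Finset.Icc 1 t, β₂ ^ (t - j) * a j with hB
  have hBnonneg : ∀ t, (∀ s, 1 ≤ s → s ≤ t → 0 < a s) → 0 ≤ B t := by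
    intro t h
    apply Finset.sum_nonneg
    intro j hj
    obtain ⟨h1, h2⟩ := Finset.mem_Icc.mp hj
    exact le_of_lt (mul_pos (pow_pos hβ0 _) (h j h1 h2))
  -- rewrite the RHS log
  have hrw : ∀ t, (∀ s, 1 ≤ s → s ≤ t → 0 < a s) →
      Real.log (1 + B t / ε) = Real.log (B t + ε) - Real.log ε := by
    intro t h
    have hb := hBnonneg t h
    have h1 : 1 + B t / ε = (B t + ε) / ε := by field_simp; ring
    rw [h1, Real.log_div (by linarith) hε.ne']
  rw [show Real.log (1 + B T / ε) = Real.log (B T + ε) - Real.log ε from hrw T ha]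
  -- induct
  induction T with
  | zero => simp [hB]
  | succ n ih =>
    have han : ∀ s, 1 ≤ s → s ≤ n → 0 < a s := fun s h1 h2 => ha s h1 (by omega)
    have ihn := ih han
    rw [show Finset.Icc 1 (n + 1) = insert (n + 1) (Finset.Icc 1 n) by
      ext x; simp only [Finset.mem_insert, Finset.mem_Icc]; omega,
      Finset.sum_insert (by simp)]
    have hBsucc : B (n + 1) = β₂ * B n + a (n + 1) := adam_B_succ β₂ a n
    have hBn : 0 ≤ B n := hBnonneg n han
    have hapos : 0 < a (n + 1) := ha (n + 1) (by omega) (by omega)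
    have hxy : a (n + 1) < B (n + 1) + ε := by
      rw [hBsucc]
      nlinarith
    have hkey := adam_key_ineq (a (n + 1)) (B (n + 1) + ε) hapos hxy
    have hsub : B (n + 1) + ε - a (n + 1) = β₂ * B n + ε := by rw [hBsucc]; ring
    rw [hsub] at hkey
    have hlog2 : Real.log β₂ + Real.log (B n + ε) ≤ Real.log (β₂ * B n + ε) := by
      rw [← Real.log_mul hβ0.ne' (by positivity)]
      apply Real.log_le_log (by positivity)
      nlinarith
    push_cast
    have : a (n + 1) / (B (n + 1) + ε) ≤
        Real.log (B (n + 1) + ε) - Real.log (B n + ε) - Real.log β₂ := by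
      linarith
    calc a (n + 1) / (B (n + 1) + ε) + ∑ t ∈ Finset.Icc 1 n, a t / (B t + ε)
        ≤ (Real.log (B (n + 1) + ε) - Real.log (B n + ε) - Real.log β₂)
          + (Real.log (B n + ε) - Real.log ε - n * Real.log β₂) := by
          exact add_le_add this ihn
      _ = Real.log (B (n + 1) + ε) - Real.log ε - (n + 1) * Real.log β₂ := by ring
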